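/- Let G' and G be groups, p : G' → G a surjective group homomorphism, s : G → G' a set-theoretic section of p (i.e. p(s(x)) = x for all x ∈ G), A an abelian group written additively, and ⟨·,·⟩ : G' × G' → A a map satisfying ⟨xy,z⟩ = ⟨x,z⟩ + ⟨y,z⟩ and ⟨x,yz⟩ = ⟨x,y⟩ + ⟨x,z⟩ for all x,y,z ∈ G', and such that ⟨x,y⟩ = 0 whenever x,y ∈ ker(p). Define α : G × G × G → A by α(x,y,z) = ⟨s(x), s(y)·s(z)·s(yz)⁻¹⟩. Then α is a 3-cocycle: for all x,y,z,t ∈ G, α(y,z,t) − α(xy,z,t) + α(x,yz,t) − α(x,y,zt) + α(x,y,z) = 0. -/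

import Mathlib

/-- If `p : G' → G` is a surjective group homomorphism with set-theoretic
section `s`, and `⟨·,·⟩ : G' × G' → A` is biadditive (multiplicatively in its arguments)
and vanishes on `ker p × ker p`, then `α(x,y,z) = ⟨s x, s y · s z · s(yz)⁻¹⟩` is a
3-cocycle on `G` with values in `A` (trivial action). -/
theorem braid_bracket_three_cocycle {G' G A : Type*} [Group G'] [Group G] [AddCommGroup A]
    (p : G' →* G) (hp : Function.Surjective p)
    (s : G → G') (hs : ∀ x : G, p (s x) = x)
    (br : G' → G' → A)
    (h1 : ∀ x y z : G', br (x * y) z = br x z + br y z)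
    (h2 : ∀ x y z : G', br x (y * z) = br x y + br x z)
    (hker : ∀ x y : G', x ∈ p.ker → y ∈ p.ker → br x y = 0)
    (α : G → G → G → A)
    (hα : ∀ x y z : G, α x y z = br (s x) (s y * s z * (s (y * z))⁻¹)) :
    ∀ x y z t : G,
      α y z t - α (x * y) z t + α x (y * z) t - α x y (z * t) + α x y z = 0 := by
  intro x y z t
  have hone : ∀ w : G', br 1 w = 0 := fun w => by
    have h := h1 1 1 w; rw [one_mul] at h; exact left_eq_add.mp h
  have hone' : ∀ w : G', br w 1 = 0 := fun w => by
    have h := h2 w 1 1; rw [one_mul] at h; exact left_eq_add.mp h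
  have hinv2 : ∀ u w : G', br u w⁻¹ = -br u w := fun u w => by
    have h := h2 u w w⁻¹; rw [mul_inv_cancel, hone'] at h
    exact eq_neg_of_add_eq_zero_right h.symm
  have hkmem : ∀ a b : G, s a * s b * (s (a * b))⁻¹ ∈ p.ker := by
    intro a b
    simp only [MonoidHom.mem_ker, map_mul, map_inv, hs]
    group
  -- expand α (x*y) z t
  have hsxy : s (x * y) = (s x * s y * (s (x * y))⁻¹)⁻¹ * (s x * s y) := by group
  have e1 : α (x * y) z t
      = br (s x) (s z * s t * (s (z * t))⁻¹) + br (s y) (s z * s t * (s (z * t))⁻¹) := by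
    rw [hα, hsxy, h1, h1,
      hker _ _ (inv_mem (hkmem x y)) (hkmem z t), zero_add]
  -- the key product identity
  have hprod : (s y * s z * (s (y * z))⁻¹) * (s (y * z) * s t * (s ((y * z) * t))⁻¹)
      = (s y * (s z * s t * (s (z * t))⁻¹) * (s y)⁻¹)
        * (s y * s (z * t) * (s (y * (z * t)))⁻¹) := by
    rw [mul_assoc y z t]
    group
  have key : br (s x) (s y * s z * (s (y * z))⁻¹)
        + br (s x) (s (y * z) * s t * (s ((y * z) * t))⁻¹)
      = br (s x) (s z * s t * (s (z * t))⁻¹)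
        + br (s x) (s y * s (z * t) * (s (y * (z * t)))⁻¹) := by
    rw [← h2, hprod, h2, h2, h2, hinv2]
    abel
  have hE : br (s x) (s y * s z * (s (y * z))⁻¹)
      = br (s x) (s z * s t * (s (z * t))⁻¹)
        + br (s x) (s y * s (z * t) * (s (y * (z * t)))⁻¹)
        - br (s x) (s (y * z) * s t * (s ((y * z) * t))⁻¹) :=
    eq_sub_of_add_eq' (by rw [add_comm] at key; exact key)
  rw [hα y z t, e1, hα x (y * z) t, hα x y (z * t), hα x y z, hE]
  abel
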